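/- For every normalized cost function C : 2^M → ℝ≥0 on a finite ground set M partitioned into disjoint parts M_1,…,M_n, there is a unique normalized function P_C (the potential function) satisfying: for every allocation S = (S_1,…,S_n) with S_i ⊆ M_i, the sum over all players i of [P_C(S) − P_C(S with S_i replaced by ∅)] equals C(S_1 ∪ … ∪ S_n). Moreover, P_C is given explicitly by P_C(S) = Σ_{∅≠I⊆N} C(∪_{i∈I} S_i) / (|I| · binom(n,|I|)). -/

import Mathlib

open Finset

variable {α : Type*}

noncomputable def potential [DecidableEq α] (n : ℕ)
    (C : Finset α → ℝ) (S : Fin n → Finset α) : ℝ :=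
  ∑ I ∈ (univ : Finset (Fin n)).powerset.filter (· ≠ ∅),
    C (I.biUnion S) / ((I.card : ℝ) * (n.choose I.card : ℝ))

private noncomputable def ww (n k : ℕ) : ℝ := ((k : ℝ) * (n.choose k : ℝ))⁻¹

private lemma potential_eq [DecidableEq α] (n : ℕ) (C : Finset α → ℝ) (hC0 : C ∅ = 0)
    (S : Fin n → Finset α) :
    potential n C S = ∑ I : Finset (Fin n), C (I.biUnion S) * ww n I.card := by
  unfold potential
  rw [Finset.sum_filter_of_ne (fun I _ h => by
    rintro rfl; simp [hC0] at h)]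
  rw [Finset.powerset_univ]
  exact Finset.sum_congr rfl fun I _ => by rw [div_eq_mul_inv]; rfl

private lemma biUnion_update [DecidableEq α] {n : ℕ} (S : Fin n → Finset α) (i : Fin n)
    (I : Finset (Fin n)) :
    I.biUnion (Function.update S i ∅) = (I.erase i).biUnion S := by
  ext a
  simp only [mem_biUnion, mem_erase]
  constructor
  · rintro ⟨j, hj, ha⟩
    rcases eq_or_ne j i with rfl | h
    · simp [Function.update_self] at ha
    · exact ⟨j, ⟨h, hj⟩, by rwa [Function.update_of_ne h] at ha⟩
  · rintro ⟨j, ⟨h, hj⟩, ha⟩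
    exact ⟨j, hj, by rwa [Function.update_of_ne h]⟩

private lemma sum_potential [DecidableEq α] (n : ℕ) (C : Finset α → ℝ) (hC0 : C ∅ = 0)
    (S : Fin n → Finset α) :
    ∑ i, (potential n C S - potential n C (Function.update S i ∅)) = C (univ.biUnion S) := by
  have hupd : ∀ i, potential n C (Function.update S i ∅)
      = ∑ I : Finset (Fin n), C ((I.erase i).biUnion S) * ww n I.card := by
    intro i
    rw [potential_eq n C hC0]
    exact Finset.sum_congr rfl fun I _ => by rw [biUnion_update]
  have step1 : ∑ i, (potential n C S - potential n C (Function.update S i ∅))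
      = ∑ I : Finset (Fin n), ∑ i : Fin n,
          (C (I.biUnion S) * ww n I.card - C ((I.erase i).biUnion S) * ww n I.card) := by
    rw [Finset.sum_comm]
    refine Finset.sum_congr rfl fun i _ => ?_
    rw [potential_eq n C hC0, hupd, Finset.sum_sub_distrib]
  rw [step1]
  have step2 : ∀ I : Finset (Fin n),
      ∑ i : Fin n, (C (I.biUnion S) * ww n I.card - C ((I.erase i).biUnion S) * ww n I.card)
      = (I.card : ℝ) * (C (I.biUnion S) * ww n I.card)
        - ∑ i ∈ I, C ((I.erase i).biUnion S) * ww n I.card := by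
    intro I
    rw [← Finset.sum_subset (Finset.subset_univ I)
      (by intro i _ hi; rw [Finset.erase_eq_of_notMem hi]; ring)]
    rw [Finset.sum_sub_distrib, Finset.sum_const, nsmul_eq_mul]
  simp_rw [step2]
  rw [Finset.sum_sub_distrib]
  have step3 : ∑ I : Finset (Fin n), ∑ i ∈ I, C ((I.erase i).biUnion S) * ww n I.card
      = ∑ J : Finset (Fin n), (Jᶜ.card : ℝ) * (C (J.biUnion S) * ww n (J.card + 1)) := by
    have : ∀ J : Finset (Fin n), (Jᶜ.card : ℝ) * (C (J.biUnion S) * ww n (J.card + 1))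
        = ∑ _i ∈ Jᶜ, C (J.biUnion S) * ww n (J.card + 1) := by
      intro J; rw [Finset.sum_const, nsmul_eq_mul]
    simp_rw [this]
    rw [Finset.sum_sigma' univ (fun I => I)
        (fun I i => C ((I.erase i).biUnion S) * ww n I.card),
      Finset.sum_sigma' univ (fun J => Jᶜ)
        (fun J _i => C (J.biUnion S) * ww n (J.card + 1))]
    refine Finset.sum_nbij' (fun p => ⟨p.1.erase p.2, p.2⟩) (fun p => ⟨insert p.2 p.1, p.2⟩)
      ?_ ?_ ?_ ?_ ?_
    · rintro ⟨I, i⟩ hp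
      simp only [Finset.mem_sigma, Finset.mem_univ, true_and, Finset.mem_compl] at hp ⊢
      exact Finset.notMem_erase i I
    · rintro ⟨J, i⟩ hp
      simp only [Finset.mem_sigma, Finset.mem_univ, true_and, Finset.mem_compl] at hp ⊢
      exact Finset.mem_insert_self i J
    · rintro ⟨I, i⟩ hp
      simp only [Finset.mem_sigma, Finset.mem_univ, true_and] at hp
      simp [Finset.insert_erase hp]
    · rintro ⟨J, i⟩ hp
      simp only [Finset.mem_sigma, Finset.mem_univ, true_and, Finset.mem_compl] at hp
      simp [Finset.erase_insert hp]
    · rintro ⟨I, i⟩ hp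
      simp only [Finset.mem_sigma, Finset.mem_univ, true_and] at hp
      simp [Finset.card_erase_add_one hp]
  rw [step3, ← Finset.sum_sub_distrib]
  rw [Finset.sum_eq_single univ]
  · -- the univ term
    have hcard : (univ : Finset (Fin n)).card = n := by simp
    have hcompl : ((univ : Finset (Fin n))ᶜ).card = 0 := by simp
    rw [hcard, hcompl]
    rcases Nat.eq_zero_or_pos n with rfl | hn
    · have : (univ : Finset (Fin 0)) = (∅ : Finset (Fin 0)) := rfl
      simp [this, hC0]
    · have hch : (n.choose n : ℝ) = 1 := by simp
      have hne : (n : ℝ) ≠ 0 := Nat.cast_ne_zero.mpr hn.ne'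
      unfold ww
      rw [hch, mul_one]
      push_cast
      field_simp
      simp
  · -- other terms vanish
    intro I _ hIne
    rcases eq_or_ne I ∅ with rfl | hIem
    · simp [hC0]
    · have hk1 : 1 ≤ I.card := Finset.card_pos.mpr (Finset.nonempty_of_ne_empty hIem)
      have hkn : I.card < n := by
        have := Finset.card_lt_card (Finset.ssubset_univ_iff.mpr hIne)
        simpa using this
      set k := I.card with hk
      have hck : (n.choose k : ℝ) ≠ 0 := by
        exact_mod_cast (Nat.choose_pos hkn.le).ne'
      have hkneR : (k : ℝ) ≠ 0 := Nat.cast_ne_zero.mpr (by omega)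
      have hnkR : (0:ℝ) < (n:ℝ) - k := by
        have : (k:ℝ) < n := by exact_mod_cast hkn
        linarith
      have hcomplR : ((Iᶜ).card : ℝ) = (n:ℝ) - k := by
        rw [Finset.card_compl, Fintype.card_fin, Nat.cast_sub hkn.le]
      have hch1 : ((k:ℝ)+1) * (n.choose (k+1) : ℝ) = ((n:ℝ) - k) * (n.choose k : ℝ) := by
        have h := Nat.choose_succ_right_eq n k
        have h2 : ((n.choose (k + 1) * (k + 1) : ℕ) : ℝ) = ((n.choose k * (n - k) : ℕ) : ℝ) := by
          exact_mod_cast congrArg Nat.cast h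
        push_cast [Nat.cast_sub hkn.le] at h2
        linarith
      unfold ww
      rw [hcomplR]
      push_cast
      rw [hch1]
      field_simp
      ring
  · intro h; simp at h

theorem stmt0 [DecidableEq α] (n : ℕ) (M : Fin n → Finset α)
    (hM : ∀ i j : Fin n, i ≠ j → Disjoint (M i) (M j))
    (C : Finset α → ℝ) (hC0 : C ∅ = 0) (hCnn : ∀ S, 0 ≤ C S) :
    (potential n C (fun _ => ∅) = 0 ∧
      ∀ S : Fin n → Finset α, (∀ i, S i ⊆ M i) →
        ∑ i, (potential n C S - potential n C (Function.update S i ∅)) =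
          C (univ.biUnion S)) ∧
    ∀ P Q : (Fin n → Finset α) → ℝ,
      (P (fun _ => ∅) = 0 ∧ ∀ S : Fin n → Finset α, (∀ i, S i ⊆ M i) →
        ∑ i, (P S - P (Function.update S i ∅)) = C (univ.biUnion S)) →
      (Q (fun _ => ∅) = 0 ∧ ∀ S : Fin n → Finset α, (∀ i, S i ⊆ M i) →
        ∑ i, (Q S - Q (Function.update S i ∅)) = C (univ.biUnion S)) →
      ∀ S : Fin n → Finset α, (∀ i, S i ⊆ M i) → P S = Q S := by
  refine ⟨⟨?_, fun S _ => sum_potential n C hC0 S⟩, ?_⟩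
  · rw [potential_eq n C hC0]
    have h : ∀ I : Finset (Fin n), I.biUnion (fun _ => (∅ : Finset α)) = ∅ := by
      intro I; ext a; simp
    simp [h, hC0]
  · rintro P Q ⟨hP0, hP⟩ ⟨hQ0, hQ⟩
    have key : ∀ k, ∀ S : Fin n → Finset α, (∀ i, S i ⊆ M i) →
        (univ.filter (fun i => S i ≠ ∅)).card = k → P S = Q S := by
      intro k
      induction k using Nat.strong_induction_on with
      | _ k ih =>
        intro S hS hcard
        rcases Nat.eq_zero_or_pos k with rfl | hk
        · have hSe : S = fun _ => ∅ := by
            funext i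
            by_contra h
            have hmem : i ∈ univ.filter (fun i => S i ≠ ∅) := by simp [h]
            rw [Finset.card_eq_zero] at hcard
            rw [hcard] at hmem
            exact absurd hmem (Finset.notMem_empty i)
          rw [hSe, hP0, hQ0]
        · set F := univ.filter (fun i => S i ≠ ∅) with hF
          have hupd : ∀ i, P (Function.update S i ∅) - Q (Function.update S i ∅)
              = if i ∈ F then 0 else (P S - Q S) := by
            intro i
            by_cases hi : i ∈ F
            · simp only [hi, if_true]
              have hiS : S i ≠ ∅ := (Finset.mem_filter.mp hi).2
              have hfe : univ.filter (fun j => Function.update S i ∅ j ≠ ∅) = F.erase i := by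
                ext j
                simp only [Finset.mem_filter, Finset.mem_erase, Finset.mem_univ, true_and, hF]
                rcases eq_or_ne j i with rfl | h
                · simp [Function.update_self]
                · simp [Function.update_of_ne h, h]
              have hcard' : (univ.filter (fun j => Function.update S i ∅ j ≠ ∅)).card = k - 1 := by
                rw [hfe, Finset.card_erase_of_mem hi, hcard]
              have hsub : ∀ j, Function.update S i ∅ j ⊆ M j := by
                intro j
                rcases eq_or_ne j i with rfl | h
                · simp [Function.update_self]
                · rw [Function.update_of_ne h]; exact hS j
              have := ih (k-1) (by omega) (Function.update S i ∅) hsub hcard'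
              linarith
            · simp only [hi, if_false]
              have hiS : S i = ∅ := by
                by_contra h
                exact hi (by simp [hF, h])
              have heq : Function.update S i ∅ = S := by
                rw [← hiS]; exact Function.update_eq_self i S
              rw [heq]
          have hterm : ∀ i : Fin n,
              (P S - P (Function.update S i ∅)) - (Q S - Q (Function.update S i ∅))
              = if i ∈ F then (P S - Q S) else 0 := by
            intro i
            have : (P S - P (Function.update S i ∅)) - (Q S - Q (Function.update S i ∅))
                = (P S - Q S) - (P (Function.update S i ∅) - Q (Function.update S i ∅)) := by ring
            rw [this, hupd i]
            by_cases hi : i ∈ F <;> simp [hi]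
          have h0 : ∑ i : Fin n,
              ((P S - P (Function.update S i ∅)) - (Q S - Q (Function.update S i ∅))) = 0 := by
            rw [Finset.sum_sub_distrib, hP S hS, hQ S hS, sub_self]
          have hsum : (F.card : ℝ) * (P S - Q S) = 0 := by
            calc (F.card : ℝ) * (P S - Q S) = ∑ _i ∈ F, (P S - Q S) := by
                  rw [Finset.sum_const, nsmul_eq_mul]
              _ = ∑ i : Fin n, (if i ∈ F then (P S - Q S) else 0) := by
                  rw [Finset.sum_ite_mem, Finset.univ_inter]
              _ = ∑ i : Fin n, ((P S - P (Function.update S i ∅)) - (Q S - Q (Function.update S i ∅))) :=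
                  Finset.sum_congr rfl fun i _ => (hterm i).symm
              _ = 0 := h0
          have hFk : (F.card : ℝ) ≠ 0 := by
            rw [hcard]; exact Nat.cast_ne_zero.mpr hk.ne'
          have := mul_eq_zero.mp hsum
          rcases this with h | h
          · exact absurd h hFk
          · linarith
    intro S hS
    exact key _ S hS rfl
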